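/- arXiv:1912.13272 — 3 statements merged into one kernel-verified Lean document; each statement's English description precedes it below -/
import Mathlib

section
/- Let N, K be positive natural numbers, let H_S be an N×N complex Hermitian matrix, and let ψ : [0,∞) → ℂ^N be a differentiable function satisfying for all t ≥ 0 the integro-differential equation ψ'(t) = −i H_S ψ(t) − ∫₀ᵗ G_Lorentz(t−s) ψ(s) ds. Define for each j = 1,…,K the function φ_j(t) = −i g_j ∫₀ᵗ exp(−(γ_j/2 + i ε_j)(t−s)) ψ(s) ds. Then the (K+1)N-dimensional vector ψ̃(t) = (ψ(t), φ_1(t), …, φ_K(t)) is differentiable and satisfies the Schrödinger equation ψ̃'(t) = −i H_eff ψ̃(t) with initial condition ψ̃(0) = (ψ(0), 0, …, 0). -/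
open MeasureTheory Matrix

/-- The reservoir correlation function for a positive combination of `K` Lorentz peaks:
`G_Lorentz(t) = Σ_j g_j² exp(−(γ_j/2)|t| − i ε_j t)`. -/
noncomputable def GLorentz (K : ℕ) (g γ ε : Fin K → ℝ) (t : ℝ) : ℂ :=
  ∑ j, (g j : ℂ) ^ 2 *
    Complex.exp (-((γ j : ℂ) / 2) * (|t| : ℝ) - Complex.I * (ε j : ℂ) * (t : ℂ))

/-- The effective non-Hermitian Hamiltonian `H_eff`: the `(K+1)N × (K+1)N` block matrix
whose `(0,0)` block is `H_S`, whose `(0,j)` and `(j,0)` blocks are `g_j I_N`, and whose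
`(j,j)` block is `(ε_j − i γ_j/2) I_N`, all remaining blocks being zero. -/
noncomputable def Heff (N K : ℕ) (HS : Matrix (Fin N) (Fin N) ℂ) (g γ ε : Fin K → ℝ) :
    Matrix (Fin N ⊕ Fin K × Fin N) (Fin N ⊕ Fin K × Fin N) ℂ :=
  Matrix.fromBlocks HS
    (fun a p => if a = p.2 then (g p.1 : ℂ) else 0)
    (fun p a => if p.2 = a then (g p.1 : ℂ) else 0)
    (fun p q => if p = q then (ε p.1 : ℂ) - Complex.I * ((γ p.1 : ℂ) / 2) else 0)

private lemma iint_apply {n : Type*} [Fintype n] {f : ℝ → n → ℂ} {a b : ℝ}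
    (hf : IntervalIntegrable f MeasureTheory.volume a b) (i : n) :
    (∫ s in a..b, f s) i = ∫ s in a..b, f s i :=
  ((ContinuousLinearMap.proj (R := ℂ) (φ := fun _ : n => ℂ) i).intervalIntegral_comp_comm hf).symm

private lemma ftc_aux {f : ℝ → ℂ} (hc : ContinuousOn f (Set.Ici 0)) {t : ℝ} (ht : 0 ≤ t) :
    HasDerivWithinAt (fun u => ∫ s in (0:ℝ)..u, f s) (f t) (Set.Ici 0) t := by
  have hint : IntervalIntegrable f volume 0 t :=
    (hc.mono (by rw [Set.uIcc_of_le ht]; exact Set.Icc_subset_Ici_self)).intervalIntegrable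
  rcases eq_or_lt_of_le ht with h | h
  · subst h
    exact intervalIntegral.integral_hasDerivWithinAt_right hint
      ⟨Set.Ici 0, Filter.mem_of_superset self_mem_nhdsWithin Set.Ioi_subset_Ici_self,
        hc.aestronglyMeasurable measurableSet_Ici⟩
      ((hc 0 Set.self_mem_Ici).mono Set.Ioi_subset_Ici_self)
  · exact (intervalIntegral.integral_hasDerivAt_right hint
      ⟨Set.Ici 0, Ici_mem_nhds h, hc.aestronglyMeasurable measurableSet_Ici⟩
      (hc.continuousAt (Ici_mem_nhds h))).hasDerivWithinAt

/-- If `ψ : [0,∞) → ℂ^N` is differentiable and satisfies the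
integro-differential equation `ψ'(t) = −i H_S ψ(t) − ∫₀ᵗ G_Lorentz(t−s) ψ(s) ds`, and the
pseudomode vectors are defined by `φ_j(t) = −i g_j ∫₀ᵗ e^{−(γ_j/2 + iε_j)(t−s)} ψ(s) ds`,
then the combined vector `ψ̃ = (ψ, φ_1, …, φ_K)` is differentiable and satisfies the
Schrödinger equation `ψ̃'(t) = −i H_eff ψ̃(t)` with initial condition `ψ̃(0) = (ψ(0), 0, …, 0)`. -/
theorem exists_markovian_dilation_lorentz
    (N K : ℕ) (hN : 0 < N) (hK : 0 < K)
    (HS : Matrix (Fin N) (Fin N) ℂ) (hHS : HS.IsHermitian)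
    (g γ ε : Fin K → ℝ) (hg : ∀ j, 0 < g j) (hγ : ∀ j, 0 < γ j)
    (ψ : ℝ → Fin N → ℂ)
    (hψ : ∀ t : ℝ, 0 ≤ t →
      HasDerivWithinAt ψ
        ((-Complex.I) • HS.mulVec (ψ t) -
          ∫ s in (0:ℝ)..t, GLorentz K g γ ε (t - s) • ψ s)
        (Set.Ici 0) t)
    (φ : Fin K → ℝ → Fin N → ℂ)
    (hφ : ∀ j t, φ j t =
      (-Complex.I * (g j : ℂ)) •
        ∫ s in (0:ℝ)..t,
          Complex.exp (-((γ j : ℂ) / 2 + Complex.I * (ε j : ℂ)) * ((t - s : ℝ) : ℂ)) • ψ s)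
    (ψtilde : ℝ → (Fin N ⊕ Fin K × Fin N) → ℂ)
    (hψtilde : ∀ t, ψtilde t = Sum.elim (ψ t) fun p => φ p.1 t p.2) :
    ψtilde 0 = Sum.elim (ψ 0) 0 ∧
    ∀ t : ℝ, 0 ≤ t →
      HasDerivWithinAt ψtilde
        ((-Complex.I) • (Heff N K HS g γ ε).mulVec (ψtilde t)) (Set.Ici 0) t := by
  have hfe : ψtilde = fun u => Sum.elim (ψ u) fun p => φ p.1 u p.2 := funext hψtilde
  subst hfe
  have hψc : ContinuousOn ψ (Set.Ici 0) := fun u hu => (hψ u hu).continuousWithinAt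
  have hψca : ∀ a, ContinuousOn (fun s => ψ s a) (Set.Ici 0) :=
    fun a => (continuous_apply a).comp_continuousOn hψc
  have hInt : ∀ (f : ℝ → ℂ), Continuous f → ∀ (a : Fin N) (u : ℝ), 0 ≤ u →
      IntervalIntegrable (fun s => f s * ψ s a) volume 0 u := by
    intro f hf a u hu
    apply ContinuousOn.intervalIntegrable
    rw [Set.uIcc_of_le hu]
    exact hf.continuousOn.mul ((hψca a).mono Set.Icc_subset_Ici_self)
  have hIntPi : ∀ (f : ℝ → ℂ), Continuous f → ∀ u : ℝ, 0 ≤ u →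
      IntervalIntegrable (fun s => f s • ψ s) volume 0 u := by
    intro f hf u hu
    apply ContinuousOn.intervalIntegrable
    rw [Set.uIcc_of_le hu]
    exact hf.continuousOn.smul (hψc.mono Set.Icc_subset_Ici_self)
  -- scalar representation of the pseudomodes
  have hrep : ∀ (j : Fin K) (a : Fin N) (u : ℝ), 0 ≤ u →
      φ j u a = (-Complex.I * (g j : ℂ)) *
        (Complex.exp (-((γ j : ℂ) / 2 + Complex.I * (ε j : ℂ)) * (u : ℂ)) *
          ∫ s in (0:ℝ)..u,
            Complex.exp (((γ j : ℂ) / 2 + Complex.I * (ε j : ℂ)) * (s : ℂ)) * ψ s a) := by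
    intro j a u hu
    have hcont : Continuous fun s : ℝ =>
        Complex.exp (-((γ j : ℂ) / 2 + Complex.I * (ε j : ℂ)) * ((u - s : ℝ) : ℂ)) := by
      fun_prop
    rw [hφ, Pi.smul_apply, smul_eq_mul]
    congr 1
    rw [iint_apply (hIntPi _ hcont u hu) a]
    rw [← intervalIntegral.integral_const_mul]
    apply intervalIntegral.integral_congr
    intro s hs
    simp only [Pi.smul_apply, smul_eq_mul, ← mul_assoc, ← Complex.exp_add]
    congr 2
    push_cast
    ring
  constructor
  · funext x
    cases x with
    | inl a => rfl
    | inr p =>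
      simp only [Sum.elim_inr, Pi.zero_apply, hφ, intervalIntegral.integral_same, smul_zero]
  · intro t ht
    apply hasDerivWithinAt_pi.2
    intro i
    cases i with
    | inl a =>
      simp only [Sum.elim_inl]
      have hD := hasDerivWithinAt_pi.1 (hψ t ht) a
      have hGcont : Continuous fun s : ℝ => GLorentz K g γ ε (t - s) := by
        unfold GLorentz; fun_prop
      have hGapp : (∫ s in (0:ℝ)..t, GLorentz K g γ ε (t - s) • ψ s) a
          = ∫ s in (0:ℝ)..t, GLorentz K g γ ε (t - s) * ψ s a := by
        rw [iint_apply (hIntPi _ hGcont t ht) a]; rfl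
      have hGsum : (∫ s in (0:ℝ)..t, GLorentz K g γ ε (t - s) * ψ s a)
          = ∑ j, (g j : ℂ) ^ 2 *
              (Complex.exp (-((γ j : ℂ) / 2 + Complex.I * (ε j : ℂ)) * (t : ℂ)) *
                ∫ s in (0:ℝ)..t,
                  Complex.exp (((γ j : ℂ) / 2 + Complex.I * (ε j : ℂ)) * (s : ℂ)) * ψ s a) := by
        have hEq : Set.EqOn (fun s : ℝ => GLorentz K g γ ε (t - s) * ψ s a)
            (fun s : ℝ => ∑ j, ((g j : ℂ) ^ 2 *
                Complex.exp (-((γ j : ℂ) / 2 + Complex.I * (ε j : ℂ)) * (t : ℂ))) *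
                (Complex.exp (((γ j : ℂ) / 2 + Complex.I * (ε j : ℂ)) * (s : ℂ)) * ψ s a))
            (Set.uIcc 0 t) := by
          intro s hs
          rw [Set.uIcc_of_le ht] at hs
          simp only [GLorentz, Finset.sum_mul]
          refine Finset.sum_congr rfl fun j _ => ?_
          have habs : |t - s| = t - s := abs_of_nonneg (by linarith [hs.1, hs.2])
          have hexp : Complex.exp (-((γ j : ℂ) / 2) * ((|t - s| : ℝ) : ℂ) -
                Complex.I * (ε j : ℂ) * ((t - s : ℝ) : ℂ))
              = Complex.exp (-((γ j : ℂ) / 2 + Complex.I * (ε j : ℂ)) * (t : ℂ)) *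
                Complex.exp (((γ j : ℂ) / 2 + Complex.I * (ε j : ℂ)) * (s : ℂ)) := by
            rw [← Complex.exp_add]
            congr 1
            rw [habs]
            push_cast
            ring
          rw [hexp]
          ring
        rw [intervalIntegral.integral_congr hEq, intervalIntegral.integral_finset_sum]
        · refine Finset.sum_congr rfl fun j _ => ?_
          rw [intervalIntegral.integral_const_mul]
          ring
        · intro j _
          have : Continuous fun s : ℝ =>
              ((g j : ℂ) ^ 2 *
                Complex.exp (-((γ j : ℂ) / 2 + Complex.I * (ε j : ℂ)) * (t : ℂ))) *
                Complex.exp (((γ j : ℂ) / 2 + Complex.I * (ε j : ℂ)) * (s : ℂ)) := by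
            fun_prop
          simpa [mul_assoc] using hInt _ this a t ht
      have hsum : ∑ j, (g j : ℂ) * φ j t a
          = (-Complex.I) * ∑ j, (g j : ℂ) ^ 2 *
              (Complex.exp (-((γ j : ℂ) / 2 + Complex.I * (ε j : ℂ)) * (t : ℂ)) *
                ∫ s in (0:ℝ)..t,
                  Complex.exp (((γ j : ℂ) / 2 + Complex.I * (ε j : ℂ)) * (s : ℂ)) * ψ s a) := by
        rw [Finset.mul_sum]
        refine Finset.sum_congr rfl fun j _ => ?_
        rw [hrep j a t ht]
        ring
      have hval : ((-Complex.I) • HS.mulVec (ψ t) -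
            ∫ s in (0:ℝ)..t, GLorentz K g γ ε (t - s) • ψ s) a
          = ((-Complex.I) • (Heff N K HS g γ ε).mulVec
              (Sum.elim (ψ t) fun p => φ p.1 t p.2)) (Sum.inl a) := by
        rw [show Heff N K HS g γ ε *ᵥ _ = _ from Matrix.fromBlocks_mulVec _ _ _ _ _]
        simp only [Heff, Matrix.fromBlocks_mulVec, Sum.elim_comp_inl, Sum.elim_comp_inr,
          Pi.smul_apply, Sum.elim_inl, Pi.add_apply, smul_eq_mul, Pi.sub_apply]
        rw [hGapp, hGsum]
        have hB : ((fun (a : Fin N) (p : Fin K × Fin N) =>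
              if a = p.2 then (g p.1 : ℂ) else 0) *ᵥ fun p => φ p.1 t p.2) a
            = ∑ j, (g j : ℂ) * φ j t a := by
          simp [Matrix.mulVec, dotProduct, Fintype.sum_prod_type, ite_mul, zero_mul,
            Finset.sum_ite_eq]
        rw [hB, hsum]
        set S := ∑ j, (g j : ℂ) ^ 2 *
            (Complex.exp (-((γ j : ℂ) / 2 + Complex.I * (ε j : ℂ)) * (t : ℂ)) *
              ∫ s in (0:ℝ)..t,
                Complex.exp (((γ j : ℂ) / 2 + Complex.I * (ε j : ℂ)) * (s : ℂ)) * ψ s a) with hS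
        linear_combination (-S) * Complex.I_sq
      exact hval ▸ hD
    | inr p =>
      obtain ⟨j, a⟩ := p
      simp only [Sum.elim_inr]
      have hFc : ContinuousOn (fun s : ℝ =>
          Complex.exp (((γ j : ℂ) / 2 + Complex.I * (ε j : ℂ)) * (s : ℂ)) * ψ s a)
          (Set.Ici 0) := by
        apply ContinuousOn.mul _ (hψca a)
        fun_prop
      have hF := ftc_aux hFc ht
      have hE : HasDerivWithinAt
          (fun u : ℝ => Complex.exp (-((γ j : ℂ) / 2 + Complex.I * (ε j : ℂ)) * (u : ℂ)))
          (-((γ j : ℂ) / 2 + Complex.I * (ε j : ℂ)) *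
            Complex.exp (-((γ j : ℂ) / 2 + Complex.I * (ε j : ℂ)) * (t : ℂ)))
          (Set.Ici 0) t := by
        have h1 : HasDerivAt (fun u : ℝ => -((γ j : ℂ) / 2 + Complex.I * (ε j : ℂ)) * (u : ℂ))
            (-((γ j : ℂ) / 2 + Complex.I * (ε j : ℂ))) t := by
          simpa using (Complex.ofRealCLM.hasDerivAt (x := t)).const_mul
            (-((γ j : ℂ) / 2 + Complex.I * (ε j : ℂ)))
        have h2 := h1.cexp.hasDerivWithinAt (s := Set.Ici 0)
        convert h2 using 1
        · rfl
        ring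
      have hmul := (hE.mul hF).const_mul (-Complex.I * (g j : ℂ))
      have hD := hmul.congr (fun u hu => hrep j a u hu) (hrep j a t ht)
      have hval : (-Complex.I * (g j : ℂ)) *
            ((-((γ j : ℂ) / 2 + Complex.I * (ε j : ℂ)) *
                Complex.exp (-((γ j : ℂ) / 2 + Complex.I * (ε j : ℂ)) * (t : ℂ))) *
              (∫ s in (0:ℝ)..t,
                Complex.exp (((γ j : ℂ) / 2 + Complex.I * (ε j : ℂ)) * (s : ℂ)) * ψ s a) +
              Complex.exp (-((γ j : ℂ) / 2 + Complex.I * (ε j : ℂ)) * (t : ℂ)) *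
                (Complex.exp (((γ j : ℂ) / 2 + Complex.I * (ε j : ℂ)) * (t : ℂ)) * ψ t a))
          = ((-Complex.I) • (Heff N K HS g γ ε).mulVec
              (Sum.elim (ψ t) fun p => φ p.1 t p.2)) (Sum.inr (j, a)) := by
        rw [show Heff N K HS g γ ε *ᵥ _ = _ from Matrix.fromBlocks_mulVec _ _ _ _ _]
        simp only [Heff, Matrix.fromBlocks_mulVec, Sum.elim_comp_inl, Sum.elim_comp_inr,
          Pi.smul_apply, Sum.elim_inr, Pi.add_apply, smul_eq_mul]
        have hC : ((fun (p : Fin K × Fin N) (b : Fin N) =>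
              if p.2 = b then (g p.1 : ℂ) else 0) *ᵥ ψ t) (j, a) = (g j : ℂ) * ψ t a := by
          simp [Matrix.mulVec, dotProduct, ite_mul, zero_mul, Finset.sum_ite_eq,
            Finset.sum_ite_eq']
        have hDdiag : ((fun (p q : Fin K × Fin N) =>
              if p = q then (ε p.1 : ℂ) - Complex.I * ((γ p.1 : ℂ) / 2) else 0) *ᵥ
              fun p => φ p.1 t p.2) (j, a)
            = ((ε j : ℂ) - Complex.I * ((γ j : ℂ) / 2)) * φ j t a := by
          simp [Matrix.mulVec, dotProduct, ite_mul, zero_mul, Finset.sum_ite_eq,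
            Finset.sum_ite_eq']
        rw [hC, hDdiag, hrep j a t ht]
        have hexp : Complex.exp (-((γ j : ℂ) / 2 + Complex.I * (ε j : ℂ)) * (t : ℂ)) *
            Complex.exp (((γ j : ℂ) / 2 + Complex.I * (ε j : ℂ)) * (t : ℂ)) = 1 := by
          rw [← Complex.exp_add, show -((γ j : ℂ) / 2 + Complex.I * (ε j : ℂ)) * (t : ℂ) +
            ((γ j : ℂ) / 2 + Complex.I * (ε j : ℂ)) * (t : ℂ) = 0 by ring, Complex.exp_zero]
        linear_combination (Complex.I * (g j : ℂ) * ((γ j : ℂ) / 2) *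
            Complex.exp (-((γ j : ℂ) / 2 + Complex.I * (ε j : ℂ)) * (t : ℂ)) *
            (∫ s in (0:ℝ)..t,
              Complex.exp (((γ j : ℂ) / 2 + Complex.I * (ε j : ℂ)) * (s : ℂ)) * ψ s a)) *
            Complex.I_sq + (-Complex.I * (g j : ℂ) * ψ t a) * hexp
      exact hval ▸ hD
end

section
/- Let N, K be positive natural numbers, let H_S be an N×N complex Hermitian matrix, and let ψ̃ = (ψ, φ_1, …, φ_K) : [0,∞) → ℂ^{(K+1)N} be a differentiable solution of the Schrödinger equation ψ̃'(t) = −i H_eff ψ̃(t) with initial condition φ_j(0) = 0 for all j = 1,…,K. Then the first component ψ : [0,∞) → ℂ^N satisfies the integro-differential equation ψ'(t) = −i H_S ψ(t) − ∫₀ᵗ G_Lorentz(t−s) ψ(s) ds for all t ≥ 0. -/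
open MeasureTheory Matrix

set_option maxHeartbeats 1000000

lemma ode_sol (lam c : ℂ) (f u : ℝ → ℂ)
    (hf : ContinuousOn f (Set.Ici 0))
    (hu : ∀ t ∈ Set.Ici (0:ℝ), HasDerivWithinAt u (c * f t + lam * u t) (Set.Ici 0) t)
    (hu0 : u 0 = 0) {t : ℝ} (ht : 0 ≤ t) :
    u t = ∫ s in (0:ℝ)..t, c * Complex.exp (lam * (t - s)) * f s := by
  have hucont : ContinuousOn u (Set.Ici 0) := fun x hx => (hu x hx).continuousWithinAt
  set w : ℝ → ℂ := fun s => Complex.exp (-lam * s) * u s with hw_def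
  have hexp : ∀ s : ℝ, HasDerivAt (fun s : ℝ => Complex.exp (-lam * s))
      (-lam * Complex.exp (-lam * s)) s := by
    intro s
    have h1 : HasDerivAt (fun s : ℝ => -lam * (s : ℂ)) (-lam) s := by
      simpa using (Complex.ofRealCLM.hasDerivAt (x := s)).const_mul (-lam)
    simpa [mul_comm] using h1.cexp
  have hw : ∀ s ∈ Set.Ici (0:ℝ), HasDerivWithinAt w
      (Complex.exp (-lam * s) * (c * f s)) (Set.Ici 0) s := by
    intro s hs
    have := ((hexp s).hasDerivWithinAt (s := Set.Ici 0)).mul (hu s hs)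
    refine this.congr_deriv (Eq.symm ?_)
    ring
  have hwcont : ContinuousOn w (Set.Icc 0 t) :=
    ((Complex.continuous_exp.comp (continuous_const.mul Complex.continuous_ofReal)).continuousOn.mul
      hucont).mono Set.Icc_subset_Ici_self
  have hderiv : ∀ s ∈ Set.Ioo (0:ℝ) t, HasDerivWithinAt w
      (Complex.exp (-lam * s) * (c * f s)) (Set.Ioi s) s := by
    intro s hs
    exact (hw s (le_of_lt hs.1)).mono (fun x hx => le_trans (le_of_lt hs.1) (le_of_lt hx))
  have hint : IntervalIntegrable (fun s => Complex.exp (-lam * s) * (c * f s)) volume 0 t := by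
    apply ContinuousOn.intervalIntegrable
    rw [Set.uIcc_of_le ht]
    exact ((Complex.continuous_exp.comp
      (continuous_const.mul Complex.continuous_ofReal)).continuousOn).mul
      ((continuousOn_const.mul hf).mono Set.Icc_subset_Ici_self)
  have key := intervalIntegral.integral_eq_sub_of_hasDeriv_right_of_le ht hwcont hderiv hint
  have hw0 : w 0 = 0 := by simp [hw_def, hu0]
  rw [hw0, sub_zero] at key
  -- key : ∫ s in 0..t, exp(-lam s) * (c * f s) = w t = exp(-lam t) * u t
  have hne : Complex.exp (-lam * t) ≠ 0 := Complex.exp_ne_zero _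
  have hut : u t = Complex.exp (lam * t) * ∫ s in (0:ℝ)..t, Complex.exp (-lam * s) * (c * f s) := by
    rw [key]
    simp only [hw_def]
    rw [← mul_assoc, ← Complex.exp_add]
    ring_nf
    simp
  rw [hut, ← intervalIntegral.integral_const_mul]
  apply intervalIntegral.integral_congr
  intro s hs
  show Complex.exp (lam * ↑t) * (Complex.exp (-lam * ↑s) * (c * f s)) = c * Complex.exp (lam * (↑t - ↑s)) * f s
  rw [show lam * (↑t - ↑s) = lam * ↑t + -lam * ↑s by ring, Complex.exp_add]
  ring


/-- If `ψ̃ = (ψ, φ_1, …, φ_K) : [0,∞) → ℂ^{(K+1)N}` is a differentiable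
solution of the Schrödinger equation `ψ̃'(t) = −i H_eff ψ̃(t)` with initial condition
`φ_j(0) = 0` for all `j`, then the first component `ψ` satisfies the integro-differential
equation `ψ'(t) = −i H_S ψ(t) − ∫₀ᵗ G_Lorentz(t−s) ψ(s) ds` for all `t ≥ 0`. -/
theorem schroedinger_solution_solves_integroDifferential
    (N K : ℕ) (hN : 0 < N) (hK : 0 < K)
    (HS : Matrix (Fin N) (Fin N) ℂ) (hHS : HS.IsHermitian)
    (g γ ε : Fin K → ℝ) (hg : ∀ j, 0 < g j) (hγ : ∀ j, 0 < γ j)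
    (ψ : ℝ → Fin N → ℂ) (φ : Fin K → ℝ → Fin N → ℂ)
    (ψtilde : ℝ → (Fin N ⊕ Fin K × Fin N) → ℂ)
    (hψtilde : ∀ t, ψtilde t = Sum.elim (ψ t) fun p => φ p.1 t p.2)
    (hSchr : ∀ t : ℝ, 0 ≤ t →
      HasDerivWithinAt ψtilde
        ((-Complex.I) • (Heff N K HS g γ ε).mulVec (ψtilde t)) (Set.Ici 0) t)
    (hinit : ∀ j, φ j 0 = 0) :
    ∀ t : ℝ, 0 ≤ t →
      HasDerivWithinAt ψ
        ((-Complex.I) • HS.mulVec (ψ t) -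
          ∫ s in (0:ℝ)..t, GLorentz K g γ ε (t - s) • ψ s)
        (Set.Ici 0) t := by
  set lam : Fin K → ℂ := fun j => -Complex.I * ((ε j : ℂ) - Complex.I * ((γ j : ℂ) / 2))
    with hlam
  set c : Fin K → ℂ := fun j => -Complex.I * (g j : ℂ) with hc
  -- component values of the Schrödinger RHS
  have hmul1 : ∀ t, ∀ a : Fin N,
      ((-Complex.I) • (Heff N K HS g γ ε).mulVec (ψtilde t)) (Sum.inl a)
      = -Complex.I * (HS.mulVec (ψ t)) a + ∑ j, c j * φ j t a := by
    intro t a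
    rw [hψtilde]
    simp [Heff, Matrix.fromBlocks, Matrix.mulVec, dotProduct, Fintype.sum_sum_type, Fintype.sum_prod_type,
      ite_mul, Finset.sum_ite_eq, Finset.mul_sum, mul_add, hc]
    ring_nf
  have hmul2 : ∀ t, ∀ j, ∀ a : Fin N,
      ((-Complex.I) • (Heff N K HS g γ ε).mulVec (ψtilde t)) (Sum.inr (j, a))
      = c j * ψ t a + lam j * φ j t a := by
    intro t j a
    rw [hψtilde]
    simp [Heff, Matrix.fromBlocks, Matrix.mulVec, dotProduct, Fintype.sum_sum_type,
      ite_mul, Finset.sum_ite_eq, hc, hlam]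
    ring
  -- component derivatives
  have hψd : ∀ (a : Fin N) (t : ℝ), 0 ≤ t → HasDerivWithinAt (fun s => ψ s a)
      (-Complex.I * (HS.mulVec (ψ t)) a + ∑ j, c j * φ j t a) (Set.Ici 0) t := by
    intro a t ht
    have h2 := (hasDerivWithinAt_pi.mp (hSchr t ht)) (Sum.inl a)
    have heq : (fun s => ψtilde s (Sum.inl a)) = fun s => ψ s a :=
      funext fun s => by rw [hψtilde]; rfl
    rw [heq, hmul1 t a] at h2
    exact h2
  have hφd : ∀ (j : Fin K) (a : Fin N) (t : ℝ), 0 ≤ t →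
      HasDerivWithinAt (fun s => φ j s a)
      (c j * ψ t a + lam j * φ j t a) (Set.Ici 0) t := by
    intro j a t ht
    have h2 := (hasDerivWithinAt_pi.mp (hSchr t ht)) (Sum.inr (j, a))
    have heq : (fun s => ψtilde s (Sum.inr (j, a))) = fun s => φ j s a :=
      funext fun s => by rw [hψtilde]; rfl
    rw [heq, hmul2 t j a] at h2
    exact h2
  have hψc : ∀ a : Fin N, ContinuousOn (fun s => ψ s a) (Set.Ici 0) :=
    fun a x hx => (hψd a x hx).continuousWithinAt
  have hφval : ∀ (j : Fin K) (a : Fin N) (t : ℝ), 0 ≤ t →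
      φ j t a = ∫ s in (0:ℝ)..t, c j * Complex.exp (lam j * (t - s)) * ψ s a := by
    intro j a t ht
    exact ode_sol (lam j) (c j) (fun s => ψ s a) (fun s => φ j s a) (hψc a)
      (fun s hs => hφd j a s hs) (by simp [hinit j]) ht
  intro t ht
  apply hasDerivWithinAt_pi.mpr
  intro a
  have h := hψd a t ht
  refine h.congr_deriv (Eq.symm ?_)
  rw [Pi.sub_apply, Pi.smul_apply, smul_eq_mul]
  have hG : Continuous (GLorentz K g γ ε) := by
    unfold GLorentz
    refine continuous_finset_sum _ fun j _ => Continuous.mul continuous_const ?_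
    exact Complex.continuous_exp.comp
      ((continuous_const.mul (Complex.continuous_ofReal.comp continuous_abs)).sub
        (continuous_const.mul Complex.continuous_ofReal))
  have hψcont : ContinuousOn ψ (Set.Ici 0) := continuousOn_pi.mpr hψc
  have hint : IntervalIntegrable (fun s => GLorentz K g γ ε (t - s) • ψ s) volume 0 t := by
    apply ContinuousOn.intervalIntegrable
    rw [Set.uIcc_of_le ht]
    exact ((hG.comp (continuous_const.sub continuous_id)).continuousOn).smul
      (hψcont.mono (fun x hx => hx.1))
  have happ : (∫ s in (0:ℝ)..t, GLorentz K g γ ε (t - s) • ψ s) a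
      = ∫ s in (0:ℝ)..t, GLorentz K g γ ε (t - s) * ψ s a := by
    have := (ContinuousLinearMap.proj (R := ℂ) (φ := fun _ : Fin N => ℂ) a
      ).intervalIntegral_comp_comm hint
    simpa using this.symm
  rw [happ]
  have hcongr : ∀ s ∈ Set.uIcc (0:ℝ) t, GLorentz K g γ ε (t - s) * ψ s a
      = ∑ j, -(c j * (c j * Complex.exp (lam j * ((t:ℂ) - (s:ℂ))) * ψ s a)) := by
    intro s hs
    rw [Set.uIcc_of_le ht] at hs
    have habs : |t - s| = t - s := abs_of_nonneg (by linarith [hs.2])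
    unfold GLorentz
    rw [Finset.sum_mul]
    refine Finset.sum_congr rfl fun j _ => ?_
    rw [habs]
    have harg : -((γ j : ℂ) / 2) * ((t - s : ℝ) : ℂ) - Complex.I * (ε j : ℂ) * ((t - s : ℝ) : ℂ)
        = lam j * ((t:ℂ) - (s:ℂ)) := by
      simp only [hlam]
      push_cast
      ring_nf
      rw [Complex.I_sq]
      ring
    rw [harg]
    simp only [hc]
    ring_nf
    rw [Complex.I_sq]
    ring
  rw [intervalIntegral.integral_congr hcongr]
  have hintj : ∀ j : Fin K, IntervalIntegrable
      (fun s => -(c j * (c j * Complex.exp (lam j * ((t:ℂ) - (s:ℂ))) * ψ s a))) volume 0 t := by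
    intro j
    apply ContinuousOn.intervalIntegrable
    rw [Set.uIcc_of_le ht]
    have hc1 : Continuous (fun s : ℝ => Complex.exp (lam j * ((t:ℂ) - (s:ℂ)))) :=
      Complex.continuous_exp.comp
        (continuous_const.mul (continuous_const.sub Complex.continuous_ofReal))
    exact (continuousOn_const.mul
      ((continuousOn_const.mul hc1.continuousOn).mul
        ((hψc a).mono Set.Icc_subset_Ici_self))).neg
  rw [intervalIntegral.integral_finset_sum (fun j _ => hintj j)]
  have : ∀ j : Fin K, (∫ s in (0:ℝ)..t,
      -(c j * (c j * Complex.exp (lam j * ((t:ℂ) - (s:ℂ))) * ψ s a)))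
      = -(c j * φ j t a) := by
    intro j
    rw [intervalIntegral.integral_neg, intervalIntegral.integral_const_mul, hφval j a t ht]
  rw [Finset.sum_congr rfl fun j _ => this j]
  simp [Finset.sum_neg_distrib, sub_neg_eq_add]
end

section
/- Let N, K be positive natural numbers, let η > 0, let H_S^(r) be an N×N complex Hermitian matrix, and let ψ : [0,∞) → ℂ^N be a differentiable function satisfying for all t ≥ 0 the renormalized integro-differential equation ψ'(t) = −i (1 + iη/2)^{−1} H_S^(r) ψ(t) − (1 + iη/2)^{−1} ∫₀ᵗ G_Lorentz(t−s) ψ(s) ds. Define for each j = 1,…,K the function φ_j(t) = −i g_j ∫₀ᵗ exp(−(γ_j/2 + i ε_j)(t−s)) ψ(s) ds. Then the (K+1)N-dimensional vector ψ̃(t) = (ψ(t), φ_1(t), …, φ_K(t)) satisfies ψ̃'(t) = −i H_eff^η ψ̃(t) with initial condition ψ̃(0) = (ψ(0), 0, …, 0), where H_eff^η is the (K+1)N × (K+1)N block matrix whose (0,0) block is (1 + iη/2)^{−1} H_S^(r), whose (0,j) block is (1 + iη/2)^{−1} g_j I_N, whose (j,0) block is g_j I_N, whose (j,j) block is (ε_j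 − i γ_j/2) I_N for j = 1,…,K, and whose remaining blocks are zero. -/
open MeasureTheory Matrix

/-- The effective non-Hermitian Hamiltonian `H_eff^η` with renormalized Ohmic contribution:
the `(K+1)N × (K+1)N` block matrix whose `(0,0)` block is `(1 + iη/2)⁻¹ H_S^(r)`, whose
`(0,j)` block is `(1 + iη/2)⁻¹ g_j I_N`, whose `(j,0)` block is `g_j I_N`, whose `(j,j)`
block is `(ε_j − i γ_j/2) I_N`, and whose remaining blocks are zero. -/
noncomputable def HeffEta (N K : ℕ) (η : ℝ) (HS : Matrix (Fin N) (Fin N) ℂ)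
    (g γ ε : Fin K → ℝ) :
    Matrix (Fin N ⊕ Fin K × Fin N) (Fin N ⊕ Fin K × Fin N) ℂ :=
  Matrix.fromBlocks ((1 + Complex.I * (η : ℂ) / 2)⁻¹ • HS)
    (fun a p => if a = p.2 then (1 + Complex.I * (η : ℂ) / 2)⁻¹ * (g p.1 : ℂ) else 0)
    (fun p a => if p.2 = a then (g p.1 : ℂ) else 0)
    (fun p q => if p = q then (ε p.1 : ℂ) - Complex.I * ((γ p.1 : ℂ) / 2) else 0)

lemma ftc_Ici {E : Type*} [NormedAddCommGroup E] [NormedSpace ℝ E] [CompleteSpace E]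
    (f : ℝ → E) (hf : ContinuousOn f (Set.Ici 0)) {t : ℝ} (ht : 0 ≤ t) :
    HasDerivWithinAt (fun u => ∫ x in (0:ℝ)..u, f x) (f t) (Set.Ici 0) t := by
  have hint : IntervalIntegrable f volume 0 t :=
    (hf.mono (by rw [Set.uIcc_of_le ht]; exact Set.Icc_subset_Ici_self)).intervalIntegrable
  have hmeas : AEStronglyMeasurable f (volume.restrict (Set.Ici 0)) :=
    hf.aestronglyMeasurable measurableSet_Ici
  rcases ht.eq_or_lt with rfl | htpos
  · exact intervalIntegral.integral_hasDerivWithinAt_right hint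
      ⟨_, Filter.mem_of_superset self_mem_nhdsWithin Set.Ioi_subset_Ici_self, hmeas⟩
      ((hf 0 Set.self_mem_Ici).mono Set.Ioi_subset_Ici_self)
  · have hmem : Set.Ici (0:ℝ) ∈ nhds t := Ici_mem_nhds htpos
    exact (intervalIntegral.integral_hasDerivAt_right hint ⟨_, hmem, hmeas⟩
      ((hf t ht).continuousAt hmem)).hasDerivWithinAt

/-- If `ψ` satisfies the renormalized integro-differential equation
`ψ'(t) = −i(1 + iη/2)⁻¹ H_S^(r) ψ(t) − (1 + iη/2)⁻¹ ∫₀ᵗ G_Lorentz(t−s) ψ(s) ds` and the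
pseudomodes are `φ_j(t) = −i g_j ∫₀ᵗ e^{−(γ_j/2 + iε_j)(t−s)} ψ(s) ds`, then
`ψ̃ = (ψ, φ_1, …, φ_K)` satisfies `ψ̃'(t) = −i H_eff^η ψ̃(t)` with
`ψ̃(0) = (ψ(0), 0, …, 0)`. -/
theorem markovian_dilation_ohmic_plus_lorentz
    (N K : ℕ) (hN : 0 < N) (hK : 0 < K) (η : ℝ) (hη : 0 < η)
    (HS : Matrix (Fin N) (Fin N) ℂ) (hHS : HS.IsHermitian)
    (g γ ε : Fin K → ℝ) (hg : ∀ j, 0 < g j) (hγ : ∀ j, 0 < γ j)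
    (ψ : ℝ → Fin N → ℂ)
    (hψ : ∀ t : ℝ, 0 ≤ t →
      HasDerivWithinAt ψ
        ((-Complex.I) • (1 + Complex.I * (η : ℂ) / 2)⁻¹ • HS.mulVec (ψ t) -
          (1 + Complex.I * (η : ℂ) / 2)⁻¹ •
            ∫ s in (0:ℝ)..t, GLorentz K g γ ε (t - s) • ψ s)
        (Set.Ici 0) t)
    (φ : Fin K → ℝ → Fin N → ℂ)
    (hφ : ∀ j t, φ j t =
      (-Complex.I * (g j : ℂ)) •
        ∫ s in (0:ℝ)..t,
          Complex.exp (-((γ j : ℂ) / 2 + Complex.I * (ε j : ℂ)) * ((t - s : ℝ) : ℂ)) • ψ s)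
    (ψtilde : ℝ → (Fin N ⊕ Fin K × Fin N) → ℂ)
    (hψtilde : ∀ t, ψtilde t = Sum.elim (ψ t) fun p => φ p.1 t p.2) :
    ψtilde 0 = Sum.elim (ψ 0) 0 ∧
    ∀ t : ℝ, 0 ≤ t →
      HasDerivWithinAt ψtilde
        ((-Complex.I) • (HeffEta N K η HS g γ ε).mulVec (ψtilde t)) (Set.Ici 0) t := by
  have ψcont : ContinuousOn ψ (Set.Ici 0) := fun t ht => (hψ t ht).continuousWithinAt
  set c : ℂ := (1 + Complex.I * (η : ℂ) / 2)⁻¹ with hc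
  set lam : Fin K → ℂ := fun j => (γ j : ℂ) / 2 + Complex.I * (ε j : ℂ) with hlam
  set F : Fin K → ℝ → Fin N → ℂ :=
    fun j u => ∫ s in (0:ℝ)..u, Complex.exp (lam j * (s : ℂ)) • ψ s with hF
  have phi_eq : ∀ j u, φ j u =
      (-Complex.I * (g j : ℂ) * Complex.exp (-(lam j) * (u : ℂ))) • F j u := by
    intro j u
    rw [hφ j u]
    have h1 : ∀ s : ℝ,
        Complex.exp (-((γ j : ℂ) / 2 + Complex.I * (ε j : ℂ)) * ((u - s : ℝ) : ℂ)) • ψ s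
        = Complex.exp (-(lam j) * (u : ℂ)) • (Complex.exp (lam j * (s : ℂ)) • ψ s) := by
      intro s
      rw [smul_smul, ← Complex.exp_add, hlam]
      push_cast
      ring_nf
    simp_rw [h1]
    rw [intervalIntegral.integral_smul, smul_smul]
  constructor
  · rw [hψtilde]
    funext x
    cases x with
    | inl a => simp
    | inr p => simp [hφ, intervalIntegral.integral_same]
  · intro t ht
    -- key integral identity
    have hIicc : Set.uIcc (0:ℝ) t ⊆ Set.Ici 0 := by
      rw [Set.uIcc_of_le ht]; exact Set.Icc_subset_Ici_self
    have hIj : ∀ j : Fin K, IntervalIntegrable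
        (fun s => ((g j : ℂ) ^ 2 * Complex.exp (-(lam j) * ((t - s : ℝ) : ℂ))) • ψ s)
        volume 0 t := by
      intro j
      apply ContinuousOn.intervalIntegrable
      exact (show Continuous (fun s : ℝ => (g j : ℂ) ^ 2 * Complex.exp (-(lam j) * ((t - s : ℝ) : ℂ))) by fun_prop).continuousOn.smul (ψcont.mono hIicc)
    have hkey : (∫ s in (0:ℝ)..t, GLorentz K g γ ε (t - s) • ψ s)
        = ∑ j, (Complex.I * (g j : ℂ)) • φ j t := by
      have hcongr : Set.EqOn (fun s => GLorentz K g γ ε (t - s) • ψ s)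
          (fun s => ∑ j, ((g j : ℂ) ^ 2 *
            Complex.exp (-(lam j) * ((t - s : ℝ) : ℂ))) • ψ s) (Set.uIcc 0 t) := by
        intro s hs
        rw [Set.uIcc_of_le ht] at hs
        have habs : |t - s| = t - s := abs_of_nonneg (by linarith [hs.2])
        simp only [GLorentz, habs, Finset.sum_smul]
        refine Finset.sum_congr rfl fun j _ => ?_
        congr 2
        rw [hlam]
        push_cast
        ring
      rw [intervalIntegral.integral_congr hcongr,
        intervalIntegral.integral_finset_sum (fun j _ => hIj j)]
      refine Finset.sum_congr rfl fun j _ => ?_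
      rw [hφ j t, smul_smul]
      have h2 : ∀ s : ℝ,
          ((g j : ℂ) ^ 2 * Complex.exp (-(lam j) * ((t - s : ℝ) : ℂ))) • ψ s
          = ((g j : ℂ) ^ 2) • (Complex.exp (-((γ j : ℂ) / 2 + Complex.I * (ε j : ℂ))
              * ((t - s : ℝ) : ℂ)) • ψ s) := by
        intro s; rw [smul_smul, hlam]
      simp_rw [h2]
      rw [intervalIntegral.integral_smul]
      congr 1
      have : Complex.I * (g j : ℂ) * (-Complex.I * (g j : ℂ)) =
          (-(Complex.I * Complex.I)) * (g j : ℂ)^2 := by ring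
      rw [this, Complex.I_mul_I]
      ring
    rw [show ψtilde = fun u => Sum.elim (ψ u) fun p => φ p.1 u p.2 from funext hψtilde]
    rw [hasDerivWithinAt_pi]
    rintro (a | ⟨j, a⟩)
    · simp only [Sum.elim_inl]
      have h1 := hasDerivWithinAt_pi.mp (hψ t ht) a
      convert h1 using 1
      rw [hkey]
      simp only [HeffEta, Matrix.mulVec, Matrix.fromBlocks, dotProduct,
        Fintype.sum_sum_type, Fintype.sum_prod_type, Matrix.of_apply, Sum.elim_inl,
        Sum.elim_inr, Pi.smul_apply, smul_eq_mul, Pi.sub_apply, Finset.sum_apply,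
        ite_mul, zero_mul, Finset.sum_ite_eq, Finset.mem_univ, if_true]
      rw [Finset.mul_sum, Finset.mul_sum, Finset.mul_sum]
      simp only [Matrix.smul_apply, smul_eq_mul, ← hc, Finset.mul_sum]
      rw [mul_add, Finset.mul_sum, Finset.mul_sum, sub_eq_add_neg, ← Finset.sum_neg_distrib]
      congr 1
      · exact Finset.sum_congr rfl fun _ _ => by ring
      · exact Finset.sum_congr rfl fun _ _ => by ring
    · simp only [Sum.elim_inr]
      have hcont : ContinuousOn (fun s : ℝ => Complex.exp (lam j * (s : ℂ)) • ψ s)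
          (Set.Ici 0) :=
        (show Continuous (fun s : ℝ => Complex.exp (lam j * (s : ℂ))) by fun_prop).continuousOn.smul ψcont
      have hFder : HasDerivWithinAt (F j) (Complex.exp (lam j * (t : ℂ)) • ψ t)
          (Set.Ici 0) t := ftc_Ici _ hcont ht
      have hcder : HasDerivWithinAt
          (fun u : ℝ => -Complex.I * (g j : ℂ) * Complex.exp (-(lam j) * (u : ℂ)))
          (-Complex.I * (g j : ℂ) * (Complex.exp (-(lam j) * (t : ℂ)) * (-(lam j))))
          (Set.Ici 0) t := by
        have hid : HasDerivAt (fun u : ℝ => (u : ℂ)) 1 t := by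
          simpa using (hasDerivAt_id t).ofReal_comp
        have := ((hid.const_mul (-(lam j))).cexp).const_mul (-Complex.I * (g j : ℂ))
        simpa [mul_comm, mul_assoc, mul_left_comm] using this.hasDerivWithinAt
      have hprod := hcder.smul hFder
      have heq : (fun u : ℝ => (-Complex.I * (g j : ℂ) *
          Complex.exp (-(lam j) * (u : ℂ))) • F j u) = fun u => φ j u :=
        funext fun u => (phi_eq j u).symm
      change HasDerivWithinAt (fun u : ℝ => (-Complex.I * (g j : ℂ) *
          Complex.exp (-(lam j) * (u : ℂ))) • F j u) _ _ _ at hprod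
      rw [heq] at hprod
      have hval : (-Complex.I * (g j : ℂ) * Complex.exp (-(lam j) * (t : ℂ))) •
            (Complex.exp (lam j * (t : ℂ)) • ψ t) +
          (-Complex.I * (g j : ℂ) * (Complex.exp (-(lam j) * (t : ℂ)) * (-(lam j)))) • F j t
          = (-Complex.I * (g j : ℂ)) • ψ t + (-(lam j)) • φ j t := by
        rw [phi_eq j t, smul_smul, smul_smul]
        congr 1
        · congr 1
          rw [mul_assoc, ← Complex.exp_add]
          norm_num
        · congr 1
          ring
      rw [hval] at hprod
      have h1 := hasDerivWithinAt_pi.mp hprod a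
      convert h1 using 1
      simp only [HeffEta, Matrix.mulVec, Matrix.fromBlocks, dotProduct,
        Fintype.sum_sum_type, Fintype.sum_prod_type, Matrix.of_apply, Sum.elim_inl,
        Sum.elim_inr, Pi.smul_apply, smul_eq_mul, Pi.add_apply,
        ite_mul, zero_mul, Finset.sum_ite_eq, Finset.mem_univ, if_true]
      simp only [hlam]
      linear_combination (((γ j : ℂ) / 2) * φ j t a) * Complex.I_sq
end
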